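/- A polynomial p ∈ ℂ[x₀,x₁,x₂] satisfies σ_t p = p for all t ∈ ℂ if and only if p lies in the ℂ-subalgebra generated by x₀ and x₁² − x₀·x₂; that is, the subalgebra of σ-invariants equals Algebra.adjoin ℂ {x₀, x₁² − x₀·x₂}. -/

import Mathlib

open MvPolynomial

/-- The `ℂ`-algebra endomorphism of `ℂ[x₀,x₁,x₂]` given by
`σ_t(x₀) = x₀`, `σ_t(x₁) = x₁ + t·x₀`, `σ_t(x₂) = x₂ + 2t·x₁ + t²·x₀`
(the `ℂ⁺`-action on `Sym²(ℂ²)`). -/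
noncomputable def sigma (t : ℂ) :
    MvPolynomial (Fin 3) ℂ →ₐ[ℂ] MvPolynomial (Fin 3) ℂ :=
  aeval ![X 0, X 1 + C t * X 0, X 2 + C (2 * t) * X 1 + C (t ^ 2) * X 0]

noncomputable def Dp : MvPolynomial (Fin 3) ℂ := X 1 ^ 2 - X 0 * X 2

lemma eval_aeval' {n m : ℕ} (x : Fin m → ℂ) (f : Fin n → MvPolynomial (Fin m) ℂ)
    (p : MvPolynomial (Fin n) ℂ) :
    eval x (aeval f p) = eval (fun i => eval x (f i)) p := by
  rw [aeval_def, algebraMap_eq, ← eval_assoc]; rfl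

lemma dens (q : MvPolynomial (Fin 3) ℂ)
    (h : ∀ x : Fin 3 → ℂ, x 0 ≠ 0 → eval x q = 0) : q = 0 := by
  have key : ∀ (y : ℂ) (s : Fin 2 → ℂ), eval (Fin.cons y s) q = 0 := by
    intro y s
    have hP : Polynomial.map (eval s) (finSuccEquiv ℂ 2 q) = 0 := by
      apply Polynomial.eq_zero_of_infinite_isRoot
      apply Set.Infinite.mono (s := {z : ℂ | z ≠ 0})
        (fun z hz => ?_) ((Set.finite_singleton (0:ℂ)).infinite_compl)
      have := h (Fin.cons z s) (by simpa using hz)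
      rwa [eval_eq_eval_mv_eval'] at this
    rw [eval_eq_eval_mv_eval', hP, Polynomial.eval_zero]
  apply MvPolynomial.funext
  intro x
  rw [← Fin.cons_self_tail x]
  simpa using key (x 0) (Fin.tail x)

lemma psi_inj : Function.Injective (aeval ![X 0, X 1, Dp] :
    MvPolynomial (Fin 3) ℂ →ₐ[ℂ] MvPolynomial (Fin 3) ℂ) := by
  intro a b hab
  have h0 : aeval ![X 0, X 1, Dp] (a - b) = 0 := by rw [map_sub, hab, sub_self]
  refine sub_eq_zero.mp (dens (a - b) (fun x hx => ?_))
  have h1 := congrArg (eval ![x 0, x 1, (x 1 ^ 2 - x 2) / x 0]) h0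
  rw [eval_aeval', map_zero] at h1
  have hfun : (fun i => eval ![x 0, x 1, (x 1 ^ 2 - x 2) / x 0] (![X 0, X 1, Dp] i)) = x := by
    funext i
    fin_cases i <;> simp [Dp] <;> field_simp <;> ring
  rwa [hfun] at h1

lemma X_dvd_of_eval (q : MvPolynomial (Fin 2) ℂ)
    (h : ∀ w : ℂ, eval ![0, w] q = 0) : X 0 ∣ q := by
  have hc : (finSuccEquiv ℂ 1 q).coeff 0 = 0 := by
    apply MvPolynomial.funext
    intro s
    have hthis := h (s 0)
    have h2 : (![0, s 0] : Fin 2 → ℂ) = Fin.cons 0 s := by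
      funext i; fin_cases i <;> simp
    rw [h2, eval_eq_eval_mv_eval'] at hthis
    rw [map_zero]
    calc eval s ((finSuccEquiv ℂ 1 q).coeff 0)
        = (Polynomial.map (eval s) (finSuccEquiv ℂ 1 q)).coeff 0 := by
          rw [Polynomial.coeff_map]
      _ = Polynomial.eval 0 (Polynomial.map (eval s) (finSuccEquiv ℂ 1 q)) := by
          rw [Polynomial.coeff_zero_eq_eval_zero]
      _ = 0 := hthis
  obtain ⟨h', hh⟩ := Polynomial.X_dvd_iff.mpr hc
  refine ⟨(finSuccEquiv ℂ 1).symm h', ?_⟩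
  apply (finSuccEquiv ℂ 1).injective
  rw [map_mul, hh, AlgEquiv.apply_symm_apply, finSuccEquiv_X_zero]

lemma exists_pow_mul_eq (p : MvPolynomial (Fin 3) ℂ) :
    ∃ (N : ℕ) (r : MvPolynomial (Fin 3) ℂ), X 0 ^ N * p = aeval ![X 0, X 1, Dp] r := by
  induction p using MvPolynomial.induction_on with
  | C a => exact ⟨0, C a, by simp⟩
  | add p q hp hq =>
    obtain ⟨N, r, hr⟩ := hp; obtain ⟨M, s, hs⟩ := hq
    refine ⟨N + M, X 0 ^ M * r + X 0 ^ N * s, ?_⟩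
    have e : X 0 ^ (N + M) * (p + q) = X 0 ^ M * (X 0 ^ N * p) + X 0 ^ N * (X 0 ^ M * q) := by
      ring
    rw [e, hr, hs, map_add, map_mul, map_mul, map_pow, map_pow, aeval_X]
    simp
  | mul_X p i hp =>
    obtain ⟨N, r, hr⟩ := hp
    have h2 : (⟨2, by omega⟩ : Fin 3) = 2 := rfl
    fin_cases i
    · refine ⟨N, r * X 0, ?_⟩
      rw [map_mul, ← hr, aeval_X]; simp; ring
    · refine ⟨N, r * X 1, ?_⟩
      rw [map_mul, ← hr, aeval_X]; simp; ring
    · refine ⟨N + 1, r * (X 1 ^ 2 - X 2), ?_⟩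
      rw [h2, map_mul, ← hr, map_sub, map_pow, aeval_X, aeval_X]
      simp only [Matrix.cons_val_one, Matrix.head_cons, Matrix.cons_val_zero]
      have h3 : (![X 0, X 1, Dp] 2 : MvPolynomial (Fin 3) ℂ) = Dp := rfl
      rw [h3, Dp]; ring

lemma sigma_comp (t : ℂ) (r : MvPolynomial (Fin 3) ℂ) :
    sigma t (aeval ![X 0, X 1, Dp] r)
      = aeval ![X 0, X 1, Dp] (aeval ![X 0, X 1 + C t * X 0, X 2] r) := by
  have hfun : (fun i => sigma t (![X 0, X 1, Dp] i))
      = (fun i => aeval ![X 0, X 1, Dp] ((![X 0, X 1 + C t * X 0, X 2] : Fin 3 → _) i)) := by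
    funext i
    fin_cases i <;> simp [sigma, Dp, map_ofNat] <;> ring
  rw [comp_aeval_apply, comp_aeval_apply, hfun]

lemma descent (N : ℕ) : ∀ (p : MvPolynomial (Fin 3) ℂ) (q : MvPolynomial (Fin 2) ℂ),
    X 0 ^ N * p = (aeval ![X 0, Dp] : MvPolynomial (Fin 2) ℂ →ₐ[ℂ] MvPolynomial (Fin 3) ℂ) q →
    ∃ q', p = (aeval ![X 0, Dp] : MvPolynomial (Fin 2) ℂ →ₐ[ℂ] MvPolynomial (Fin 3) ℂ) q' := by
  induction N with
  | zero => intro p q h; exact ⟨q, by simpa using h⟩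
  | succ N ih =>
    intro p q h
    have hq0 : ∀ w : ℂ, eval ![(0:ℂ), w] q = 0 := by
      intro w
      obtain ⟨b, hb⟩ := IsAlgClosed.exists_pow_nat_eq (k := ℂ) w (n := 2) (by norm_num)
      have h1 := congrArg (eval ![0, b, 0]) h
      rw [eval_aeval'] at h1
      have hL : eval ![(0:ℂ), b, 0] (X 0 ^ (N + 1) * p) = 0 := by
        simp [map_mul, map_pow]
      have hfun : (fun i => eval ![(0:ℂ), b, 0] ((![X 0, Dp] : Fin 2 → _) i))
          = ![(0:ℂ), w] := by
        funext i
        fin_cases i <;> simp [Dp, ← hb]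
      rw [hL, hfun] at h1
      exact h1.symm
    obtain ⟨q', hq'⟩ := X_dvd_of_eval q hq0
    have hX0 : (X 0 : MvPolynomial (Fin 3) ℂ) ≠ 0 := X_ne_zero 0
    have hcan : X 0 * (X 0 ^ N * p) = X 0 * aeval ![X 0, Dp] q' := by
      have e1 : X 0 * (X 0 ^ N * p) = X 0 ^ (N + 1) * p := by ring
      rw [e1, h, hq', map_mul, aeval_X]
      simp
    exact ih p q' (mul_left_cancel₀ hX0 hcan)

/-- A polynomial `p ∈ ℂ[x₀,x₁,x₂]` is `σ`-invariant if and only if it lies in the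
`ℂ`-subalgebra generated by `x₀` and `x₁² − x₀·x₂`. -/
theorem invariant_iff_mem_adjoin (p : MvPolynomial (Fin 3) ℂ) :
    (∀ t : ℂ, sigma t p = p) ↔
      p ∈ Algebra.adjoin ℂ
        ({X 0, X 1 ^ 2 - X 0 * X 2} : Set (MvPolynomial (Fin 3) ℂ)) := by
  have hset : ({X 0, X 1 ^ 2 - X 0 * X 2} : Set (MvPolynomial (Fin 3) ℂ))
      = Set.range ![X 0, Dp] := by
    ext y
    constructor
    · rintro (rfl | rfl)
      · exact ⟨0, rfl⟩
      · exact ⟨1, rfl⟩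
    · rintro ⟨i, rfl⟩
      fin_cases i
      · exact Or.inl rfl
      · exact Or.inr rfl
  constructor
  · intro hσ
    obtain ⟨N, r, hr⟩ := exists_pow_mul_eq p
    have hshift : ∀ t : ℂ, aeval ![X 0, X 1 + C t * X 0, X 2] r = r := by
      intro t
      apply psi_inj
      rw [← sigma_comp, ← hr, map_mul, map_pow, hσ t]
      have hX : sigma t (X 0) = X 0 := by simp [sigma]
      rw [hX]
    have hr' : r = aeval ![X 0, (0 : MvPolynomial (Fin 3) ℂ), X 2] r := by
      refine (sub_eq_zero.mp (dens (r - aeval ![X 0, 0, X 2] r) (fun x hx => ?_)))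
      rw [map_sub, eval_aeval']
      have h1 := congrArg (eval x) (hshift (-(x 1) / x 0))
      rw [eval_aeval'] at h1
      have hfun1 : (fun i => eval x ((![X 0, X 1 + C (-(x 1)/x 0) * X 0, X 2] : Fin 3 → _) i))
          = (fun i => eval x ((![X 0, (0 : MvPolynomial (Fin 3) ℂ), X 2] : Fin 3 → _) i)) := by
        funext i
        fin_cases i <;> simp <;> field_simp <;> ring
      rw [hfun1] at h1
      rw [h1, sub_self]
    have key : X 0 ^ N * p
        = aeval ![X 0, Dp] (aeval ![X 0, (0 : MvPolynomial (Fin 2) ℂ), X 1] r) := by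
      have hfun2 : (fun i => aeval ![X 0, X 1, Dp]
              ((![X 0, 0, X 2] : Fin 3 → MvPolynomial (Fin 3) ℂ) i))
          = (fun i => (aeval ![X 0, Dp] : MvPolynomial (Fin 2) ℂ →ₐ[ℂ] MvPolynomial (Fin 3) ℂ)
              ((![X 0, (0 : MvPolynomial (Fin 2) ℂ), X 1] : Fin 3 → _) i)) := by
        funext i
        fin_cases i <;> simp [Dp]
      conv_lhs => rw [hr, hr']
      rw [comp_aeval_apply, comp_aeval_apply, hfun2]
    obtain ⟨q', hq'⟩ := descent N p _ key
    rw [hq', hset, Algebra.adjoin_range_eq_range_aeval]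
    exact ⟨q', rfl⟩
  · intro hp t
    induction hp using Algebra.adjoin_induction with
    | mem x hx =>
      rcases hx with rfl | hx
      · simp [sigma]
      · rcases hx with rfl
        simp [sigma, map_ofNat]
        ring
    | algebraMap r => exact (sigma t).commutes r
    | add x y _ _ hx hy => rw [map_add, hx, hy]
    | mul x y _ _ hx hy => rw [map_mul, hx, hy]
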